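/- Let ζ be a primitive p^m-th root of unity over the finite field F with 2^n elements, and let j = k·p^r with gcd(k,p)=1. Then ζ^j and ζ^{-j} are roots of the same irreducible polynomial over F if and only if there exists t with (2^n)^t ≡ -1 (mod p^{m-r}). -/

import Mathlib

open Polynomial

/-- Fixed points of `x ↦ x ^ |F|` in an `F`-algebra field lie in (the image of) `F`. -/
private lemma fixed_mem_range (F K : Type*) [Field F] [Fintype F] [Field K] [Algebra F K]
    (c : K) (hc : c ^ Fintype.card F = c) : ∃ a : F, algebraMap F K a = c := by
  classical
  by_contra h
  push_neg at h
  set q := Fintype.card F with hq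
  have hq1 : 1 < q := Fintype.one_lt_card
  set P : K[X] := X ^ q - X with hP
  have hdeg : P.natDegree = q := FiniteField.X_pow_card_sub_X_natDegree_eq K hq1
  have hP0 : P ≠ 0 := FiniteField.X_pow_card_sub_X_ne_zero K hq1
  have hroot : ∀ x : K, x ^ q = x → x ∈ P.roots.toFinset := by
    intro x hx
    rw [Multiset.mem_toFinset, mem_roots hP0]
    simp [hP, IsRoot, sub_eq_zero, hx]
  have hsub : insert c (Finset.univ.image (algebraMap F K)) ⊆ P.roots.toFinset := by
    intro x hx
    rcases Finset.mem_insert.mp hx with rfl | hx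
    · exact hroot x hc
    · obtain ⟨a, -, rfl⟩ := Finset.mem_image.mp hx
      apply hroot
      rw [← map_pow, FiniteField.pow_card]
  have hcard : (insert c (Finset.univ.image (algebraMap F K))).card = q + 1 := by
    rw [Finset.card_insert_of_notMem, Finset.card_image_of_injective _
      (algebraMap F K).injective, Finset.card_univ]
    intro hmem
    obtain ⟨a, -, ha⟩ := Finset.mem_image.mp hmem
    exact h a ha
  have h1 : q + 1 ≤ P.roots.toFinset.card := hcard ▸ Finset.card_le_card hsub
  have h2 : P.roots.toFinset.card ≤ Multiset.card P.roots := P.roots.toFinset_card_le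
  have h3 : Multiset.card P.roots ≤ P.natDegree := P.card_roots'
  omega

private lemma pow_eq_pow_of_modEq' {K : Type*} [Monoid K] {α : K} {N : ℕ}
    (hN : α ^ N = 1) {a b : ℕ} (h : a ≡ b [MOD N]) : α ^ a = α ^ b := by
  have key : ∀ c : ℕ, α ^ c = α ^ (c % N) := fun c => by
    conv_lhs => rw [← Nat.mod_add_div c N, pow_add, pow_mul, hN, one_pow, mul_one]
  have h' : a % N = b % N := h
  rw [key a, key b, h']

private lemma minpoly_pow_card (F K : Type*) [Field F] [Fintype F] [Field K] [Algebra F K]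
    {x : K} (hx : IsIntegral F x) : minpoly F x = minpoly F (x ^ Fintype.card F) := by
  obtain ⟨k, hp, hcard⟩ := FiniteField.card F (ringChar F)
  haveI : CharP K (ringChar F) :=
    charP_of_injective_algebraMap (algebraMap F K).injective (ringChar F)
  haveI : Fact (ringChar F).Prime := ⟨hp⟩
  let φ : K →ₐ[F] K :=
    { iterateFrobenius K (ringChar F) (k : ℕ) with
      commutes' := fun a => by
        show iterateFrobenius K (ringChar F) (k : ℕ) (algebraMap F K a) = algebraMap F K a
        rw [iterateFrobenius_def, ← map_pow, ← hcard, FiniteField.pow_card] }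
  have hφ : x ^ Fintype.card F = φ x := by
    show x ^ Fintype.card F = iterateFrobenius K (ringChar F) (k : ℕ) x
    rw [iterateFrobenius_def, hcard]
  have h0 : Polynomial.aeval (x ^ Fintype.card F) (minpoly F x) = 0 := by
    rw [hφ, Polynomial.aeval_algHom_apply, minpoly.aeval, map_zero]
  exact minpoly.eq_of_irreducible_of_monic (minpoly.irreducible hx) h0 (minpoly.monic hx)

private lemma minpoly_pow_card_pow (F K : Type*) [Field F] [Fintype F] [Field K] [Algebra F K]
    {x : K} (hx : IsIntegral F x) (t : ℕ) :
    minpoly F x = minpoly F (x ^ Fintype.card F ^ t) := by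
  induction t with
  | zero => simp
  | succ t ih =>
    rw [ih, pow_succ, pow_mul]
    exact minpoly_pow_card F K (hx.pow _)

/-- Let `ζ` be a primitive `p^m`-th root of unity over the finite field `F` of order `2^n`,
and `j = k * p^r` with `gcd(k, p) = 1`. Then `ζ^j` and `ζ^{-j}` are roots of the same
irreducible polynomial over `F` (i.e. have the same minimal polynomial) iff there exists
`t` with `(2^n)^t ≡ -1 (mod p^(m-r))`. -/
theorem same_irreducible_factor_iff (p n m : ℕ) (hp : p.Prime) (hpodd : Odd p)
    (hn : 1 ≤ n) (hm : 1 ≤ m)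
    (F K : Type*) [Field F] [Fintype F] [Field K] [Algebra F K]
    (hF : Fintype.card F = 2 ^ n)
    (ζ : K) (hζ : IsPrimitiveRoot ζ (p ^ m))
    (j k r : ℕ) (hr : r ≤ m) (hj : j = k * p ^ r) (hk : Nat.Coprime k p) :
    minpoly F (ζ ^ j) = minpoly F (ζ ^ j)⁻¹ ↔
      ∃ t : ℕ, ((2 ^ n : ZMod (p ^ (m - r))) : ZMod (p ^ (m - r))) ^ t = -1 := by
  classical
  set q : ℕ := 2 ^ n with hq
  set N : ℕ := p ^ (m - r) with hN
  have hq_card : Fintype.card F = q := hF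
  have hNpos : 0 < N := pow_pos hp.pos _
  haveI : NeZero N := ⟨hNpos.ne'⟩
  set α := ζ ^ j with hαdef
  have hα : IsPrimitiveRoot α N := by
    have h1 : IsPrimitiveRoot (ζ ^ k) (p ^ m) := hζ.pow_of_coprime k (hk.pow_right m)
    have h2 : IsPrimitiveRoot ((ζ ^ k) ^ p ^ r) N :=
      IsPrimitiveRoot.pow (pow_pos hp.pos m) h1 (by rw [hN, ← pow_add]; congr 1; omega)
    rwa [← pow_mul, ← hj] at h2
  have hαN : α ^ N = 1 := hα.pow_eq_one
  have hα0 : α ≠ 0 := by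
    intro h0
    rw [h0, zero_pow hNpos.ne'] at hαN
    exact zero_ne_one hαN
  have hα_int : IsIntegral F α := by
    refine ⟨X ^ N - 1, ?_, ?_⟩
    · simpa using monic_X_pow_sub_C (1 : F) hNpos.ne'
    · simp [hαN]
  -- coprimality
  have hp2 : p ≠ 2 := by
    rintro rfl
    rw [Nat.odd_iff] at hpodd
    norm_num at hpodd
  have hqN : Nat.Coprime q N := by
    rw [hq, hN]
    exact Nat.Coprime.pow _ _ ((Nat.coprime_primes Nat.prime_two hp).mpr (Ne.symm hp2))
  set u : (ZMod N)ˣ := ZMod.unitOfCoprime q hqN with hu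
  set s : ℕ := orderOf u with hsdef
  have hs : 0 < s := orderOf_pos u
  haveI : NeZero s := ⟨hs.ne'⟩
  have hu_coe : ((u : ZMod N)) = (q : ZMod N) := ZMod.coe_unitOfCoprime q hqN
  have L1 : ∀ a b : ℕ, a ≡ b [MOD s] → α ^ q ^ a = α ^ q ^ b := by
    intro a b hab
    have h1 : u ^ a = u ^ b := pow_eq_pow_iff_modEq.mpr hab
    have h2 : ((q : ZMod N)) ^ a = ((q : ZMod N)) ^ b := by
      rw [← hu_coe, ← Units.val_pow_eq_pow_val, ← Units.val_pow_eq_pow_val, h1]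
    have h3 : q ^ a ≡ q ^ b [MOD N] := by
      rw [← ZMod.natCast_eq_natCast_iff]
      push_cast
      exact h2
    exact pow_eq_pow_of_modEq' hαN h3
  set g : K[X] := ∏ t : ZMod s, (X - C (α ^ q ^ (t.val))) with hg
  -- characteristic 2
  obtain ⟨k₀, hp₀, hcard₀⟩ := FiniteField.card F (ringChar F)
  have hchar2 : ringChar F = 2 := by
    have hdvd : ringChar F ∣ q := by
      rw [← hF, hcard₀]
      exact dvd_pow_self _ k₀.pos.ne'
    rw [hq] at hdvd
    exact (Nat.prime_dvd_prime_iff_eq hp₀ Nat.prime_two).mp (hp₀.dvd_of_dvd_pow hdvd)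
  haveI : CharP F 2 := hchar2 ▸ ringChar.charP F
  haveI : CharP K 2 := charP_of_injective_algebraMap (algebraMap F K).injective 2
  haveI : Fact (Nat.Prime 2) := ⟨Nat.prime_two⟩
  have key : ∀ t : ZMod s, (α ^ q ^ t.val) ^ q = α ^ q ^ (t + 1).val := by
    intro t
    rw [← pow_mul, ← pow_succ]
    refine L1 (t.val + 1) ((t + 1).val) ?_
    rw [← ZMod.natCast_eq_natCast_iff]
    push_cast [ZMod.natCast_zmod_val]
    rfl
  have hmap : g.map (iterateFrobenius K 2 n) = g := by
    rw [hg]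
    have : (∏ t : ZMod s, (X - C (α ^ q ^ t.val))).map (iterateFrobenius K 2 n)
        = ∏ t : ZMod s, (X - C (α ^ q ^ (t + 1).val)) := by
      rw [Polynomial.map_prod]
      refine Finset.prod_congr rfl fun t _ => ?_
      rw [Polynomial.map_sub, Polynomial.map_X, Polynomial.map_C, iterateFrobenius_def,
        ← hq, key t]
    rw [this]
    exact Fintype.prod_equiv (Equiv.addRight (1 : ZMod s))
      (fun t => X - C (α ^ q ^ (t + 1).val)) (fun t => X - C (α ^ q ^ t.val)) (fun t => rfl)
  have hcoeff : ∀ i, g.coeff i ∈ Set.range (algebraMap F K) := by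
    intro i
    have h1 : (g.coeff i) ^ q = g.coeff i := by
      have h2 := congrArg (fun P : K[X] => P.coeff i) hmap
      simpa [Polynomial.coeff_map, iterateFrobenius_def, hq] using h2
    exact fixed_mem_range F K _ (by rw [hq_card]; exact h1)
  obtain ⟨g₀, hg₀⟩ := (Polynomial.mem_lifts _).mp
    ((Polynomial.lifts_iff_coeff_lifts _).mpr hcoeff)
  have hg_eval : ∀ x : K, Polynomial.eval x g = ∏ t : ZMod s, (x - α ^ q ^ t.val) := by
    intro x
    rw [hg, Polynomial.eval_prod]
    simp
  have hgα : Polynomial.eval α g = 0 := by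
    rw [hg_eval]
    apply Finset.prod_eq_zero (Finset.mem_univ (0 : ZMod s))
    simp [ZMod.val_zero]
  have hdvd : minpoly F α ∣ g₀ :=
    minpoly.dvd F α (by rw [Polynomial.aeval_def, ← Polynomial.eval_map, hg₀]; exact hgα)
  constructor
  · intro hmin
    have h1 : Polynomial.aeval α⁻¹ g₀ = 0 := by
      obtain ⟨c, hc⟩ := hdvd
      rw [hc, map_mul, hmin, minpoly.aeval, zero_mul]
    have h2 : Polynomial.eval α⁻¹ g = 0 := by
      rw [← hg₀, Polynomial.eval_map, ← Polynomial.aeval_def]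
      exact h1
    rw [hg_eval] at h2
    obtain ⟨t, -, ht⟩ := Finset.prod_eq_zero_iff.mp h2
    have ht' : α⁻¹ = α ^ q ^ t.val := sub_eq_zero.mp ht
    refine ⟨t.val, ?_⟩
    have hmul : α ^ (q ^ t.val + 1) = 1 := by
      rw [pow_succ, ← ht', inv_mul_cancel₀ hα0]
    have hdvd2 : N ∣ q ^ t.val + 1 := (hα.pow_eq_one_iff_dvd _).mp hmul
    have h3 : ((q ^ t.val + 1 : ℕ) : ZMod N) = 0 :=
      (ZMod.natCast_eq_zero_iff _ _).mpr hdvd2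
    push_cast [hq] at h3
    linear_combination h3
  · rintro ⟨t, ht⟩
    have hdvd2 : N ∣ q ^ t + 1 := by
      have h3 : ((q ^ t + 1 : ℕ) : ZMod N) = 0 := by
        push_cast [hq]
        rw [ht]
        ring
      exact (ZMod.natCast_eq_zero_iff _ _).mp h3
    have hmul : α ^ (q ^ t + 1) = 1 := (hα.pow_eq_one_iff_dvd _).mpr hdvd2
    have hinv : α⁻¹ = α ^ q ^ t := by
      symm
      apply eq_inv_of_mul_eq_one_left
      rw [← pow_succ]
      exact hmul
    rw [hinv]
    have h4 := minpoly_pow_card_pow F K hα_int t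
    rwa [hq_card] at h4
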